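/- arXiv:2205.12814 — 2 statements merged into one kernel-verified Lean document; each statement's English description precedes it below -/
import Mathlib

section
/- Let λ = (a_1^{b_1}, …, a_r^{b_r}) with a_1 > … > a_r > 0, b_i > 0, and r ≥ 2, and define λ^i as the partition obtained by removing the hook: λ^i = (a_1^{b_1}, …, a_{i−1}^{b_{i−1}}, a_i^{b_i−1}, (a_{i+1}−1)^{b_{i+1}+1}, a_{i+2}^{b_{i+2}}, …, a_r^{b_r}) for 1 ≤ i ≤ r−1. Then the intersection (componentwise minimum) of all λ^1, …, λ^{r−1} equals λ^0 := (a_1^{b_1−1}, (a_2−1)^{b_2}, …, (a_{r−1}−1)^{b_{r−1}}, (a_r−1)^{b_r+1}). -/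
/-- The partition `(a_1^{b_1}, …, a_r^{b_r})` given by lists of part sizes `a`
and multiplicities `b`, as a function (0-indexed; zero beyond the last part). -/
def rectsP (a b : List ℕ) : ℕ → ℕ :=
  fun i => ((a.zip b).flatMap fun p => List.replicate p.2 p.1).getD i 0

lemma rectsP_nil_left (b : List ℕ) (n : ℕ) : rectsP [] b n = 0 := rfl

lemma rectsP_nil_right (a : List ℕ) (n : ℕ) : rectsP a [] n = 0 := by
  simp [rectsP]

lemma rectsP_cons (x y : ℕ) (a b : List ℕ) (n : ℕ) :
    rectsP (x::a) (y::b) n = if n < y then x else rectsP a b (n - y) := by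
  simp only [rectsP, List.zip_cons_cons, List.flatMap_cons]
  split
  · rw [List.getD_append _ _ _ _ (by simpa using ‹n < y›)]
    simp [List.getD_eq_getElem?_getD, ‹n < y›]
  · rw [List.getD_append_right _ _ _ _ (by simp; omega)]
    simp

lemma rectsP_eq_zero : ∀ (a b : List ℕ) (n : ℕ), b.sum ≤ n → rectsP a b n = 0
  | [], b, n, _ => rectsP_nil_left b n
  | _ :: _, [], n, _ => rectsP_nil_right _ n
  | x :: a, y :: b, n, h => by
    rw [rectsP_cons]
    have hy : ¬ n < y := by simp at h; omega
    rw [if_neg hy]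
    exact rectsP_eq_zero a b (n - y) (by simp at h ⊢; omega)

lemma rectsP_block : ∀ (j : ℕ) (a b : List ℕ) (n : ℕ), j < b.length →
    (b.take j).sum ≤ n → n < (b.take (j+1)).sum → rectsP a b n = a.getD j 0
  | j, [], b, n, _, h1, h2 => by
    rw [rectsP_nil_left]; simp
  | 0, x :: a, y :: b, n, _, h1, h2 => by
    rw [rectsP_cons, if_pos (by simpa using h2)]; rfl
  | (j+1), x :: a, y :: b, n, hj, h1, h2 => by
    simp only [List.take_succ_cons, List.sum_cons] at h1 h2
    rw [rectsP_cons, if_neg (by omega)]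
    exact rectsP_block j a b (n - y) (by simpa using hj) (by omega) (by omega)

lemma rectsP_exists_block : ∀ (b : List ℕ) (n : ℕ), n < b.sum →
    ∃ j < b.length, (b.take j).sum ≤ n ∧ n < (b.take (j+1)).sum
  | [], n, h => by simp at h
  | y :: b, n, h => by
    by_cases hy : n < y
    · exact ⟨0, by simp, by simp, by simpa using hy⟩
    · obtain ⟨j, hj, h1, h2⟩ := rectsP_exists_block b (n - y) (by simp at h; omega)
      exact ⟨j + 1, by simpa using hj, by simp; omega, by simp; omega⟩

lemma rectsP_le {c : ℕ} : ∀ (a b : List ℕ) (n : ℕ), (∀ x ∈ a, x ≤ c) → rectsP a b n ≤ c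
  | [], b, n, _ => by rw [rectsP_nil_left]; omega
  | _ :: _, [], n, _ => by rw [rectsP_nil_right]; omega
  | x :: a, y :: b, n, h => by
    rw [rectsP_cons]
    split
    · exact h x (by simp)
    · exact rectsP_le a b _ (fun z hz => h z (by simp [hz]))

lemma rectsP_antitone : ∀ (a b : List ℕ), a.Chain' (· ≥ ·) → ∀ (m n : ℕ), m ≤ n →
    rectsP a b n ≤ rectsP a b m
  | [], b, _, m, n, _ => by rw [rectsP_nil_left]; omega
  | _ :: _, [], _, m, n, _ => by rw [rectsP_nil_right]; omega
  | x :: a, y :: b, hch, m, n, hmn => by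
    have hall : ∀ z ∈ a, z ≤ x := by
      have := List.isChain_iff_pairwise.mp hch
      intro z hz
      exact (List.pairwise_cons.mp this).1 z hz
    rcases List.isChain_cons.mp hch with ⟨hx, hch'⟩
    rw [rectsP_cons, rectsP_cons]
    by_cases hm : m < y
    · rw [if_pos hm]
      split
      · exact le_rfl
      · exact rectsP_le a b _ hall
    · rw [if_neg hm, if_neg (by omega)]
      exact rectsP_antitone a b hch' (m - y) (n - y) (by omega)

lemma getD_set_ne (l : List ℕ) (i n x : ℕ) (h : i ≠ n) :
    (l.set i x).getD n 0 = l.getD n 0 := by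
  simp [List.getD_eq_getElem?_getD, List.getElem?_set_ne h]

lemma getD_set_self (l : List ℕ) (i x : ℕ) (h : i < l.length) :
    (l.set i x).getD i 0 = x := by
  simp [List.getD_eq_getElem?_getD, List.getElem?_set_self h]

lemma getD_take (l : List ℕ) (i k : ℕ) (h : i < k) :
    (l.take k).getD i 0 = l.getD i 0 := by
  simp [List.getD_eq_getElem?_getD, List.getElem?_take, h]

lemma sum_take_set_of_le (l : List ℕ) (i k x : ℕ) (h : k ≤ i) :
    ((l.set i x).take k).sum = (l.take k).sum := by
  rw [List.take_set, List.set_eq_of_length_le (by simp; omega)]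

lemma sum_take_set (l : List ℕ) (i k x : ℕ) (h : i < k) (hi : i < l.length) :
    ((l.set i x).take k).sum + l.getD i 0 = (l.take k).sum + x := by
  rw [List.take_set]
  set L := l.take k with hL
  have hiL : i < L.length := by simp [hL]; omega
  have h1 : (L.set i x).sum = (L.take i).sum + x + (L.drop (i+1)).sum := by
    rw [List.sum_set, if_pos hiL]
  have h2 : L.sum = (L.take (i+1)).sum + (L.drop (i+1)).sum :=
    (List.sum_take_add_sum_drop L (i+1)).symm
  have h3 : (L.take (i+1)).sum = (L.take i).sum + L[i] := List.sum_take_succ L i hiL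
  have h4 : l.getD i 0 = L[i] := by
    have : L[i]? = l[i]? := by rw [hL, List.getElem?_take, if_pos h]
    rw [List.getD_eq_getElem?_getD, ← this, List.getElem?_eq_getElem hiL]
    rfl
  omega

lemma sum_take_mono (b : List ℕ) {k l : ℕ} (h : k ≤ l) :
    (b.take k).sum ≤ (b.take l).sum := by
  have hpre : b.take k <+: b.take l := by
    rw [List.prefix_take_iff]
    exact ⟨List.take_prefix k b, by simp; omega⟩
  exact hpre.sublist.sum_le_sum (fun x _ => Nat.zero_le x)


/-- Removing the `i`-th boundary hook (0-indexed; this is the paper's `λ^{i+1}`). -/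
def hookRemove (a b : List ℕ) (i : ℕ) : ℕ → ℕ :=
  rectsP (a.set (i + 1) (a.getD (i + 1) 0 - 1))
    ((b.set i (b.getD i 0 - 1)).set (i + 1) (b.getD (i + 1) 0 + 1))

/-- `λ^0 = (a_1^{b_1−1}, (a_2−1)^{b_2}, …, (a_{r−1}−1)^{b_{r−1}}, (a_r−1)^{b_r+1})`. -/
def lamZero (a b : List ℕ) : ℕ → ℕ :=
  rectsP (a.headI :: (a.tail.map fun x => x - 1))
    ((b.set 0 (b.headI - 1)).set (b.length - 1) (b.getD (b.length - 1) 0 + 1))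

section Eval

variable {r : ℕ} {a b : List ℕ} (hr : 2 ≤ r) (ha : a.length = r) (hb : b.length = r)
  (hbp : ∀ x ∈ b, 0 < x)

-- positivity of getD entries
lemma bpos_getD (hb : b.length = r) (hbp : ∀ x ∈ b, 0 < x) {k : ℕ} (hk : k < r) :
    1 ≤ b.getD k 0 := by
  rw [List.getD_eq_getElem b 0 (by omega)]
  exact hbp _ (List.getElem_mem _)

-- prefix sums of the modified multiplicity list b' of hookRemove
lemma hook_take_le (hb : b.length = r) {i k : ℕ} (hk : k ≤ i) :
    (((b.set i (b.getD i 0 - 1)).set (i + 1) (b.getD (i + 1) 0 + 1)).take k).sum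
      = (b.take k).sum := by
  rw [sum_take_set_of_le _ _ _ _ (by omega), sum_take_set_of_le _ _ _ _ hk]

lemma hook_take_succ (hb : b.length = r) (hbp : ∀ x ∈ b, 0 < x) {i : ℕ} (hi : i + 1 < r) :
    (((b.set i (b.getD i 0 - 1)).set (i + 1) (b.getD (i + 1) 0 + 1)).take (i+1)).sum + 1
      = (b.take (i+1)).sum := by
  rw [sum_take_set_of_le _ _ _ _ (le_refl (i+1))]
  have := sum_take_set b i (i+1) (b.getD i 0 - 1) (by omega) (by omega)
  have := bpos_getD hb hbp (show i < r by omega)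
  omega

lemma hook_take_ge (hb : b.length = r) (hbp : ∀ x ∈ b, 0 < x) {i k : ℕ} (hi : i + 1 < r)
    (hk : i + 2 ≤ k) :
    (((b.set i (b.getD i 0 - 1)).set (i + 1) (b.getD (i + 1) 0 + 1)).take k).sum
      = (b.take k).sum := by
  set b1 := b.set i (b.getD i 0 - 1) with hb1
  have e1 : (b1.take k).sum + b.getD i 0 = (b.take k).sum + (b.getD i 0 - 1) :=
    sum_take_set b i k _ (by omega) (by omega)
  have e2 : ((b1.set (i+1) (b.getD (i+1) 0 + 1)).take k).sum + b1.getD (i+1) 0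
      = (b1.take k).sum + (b.getD (i+1) 0 + 1) :=
    sum_take_set b1 (i+1) k _ (by omega) (by simp [hb1]; omega)
  have e3 : b1.getD (i+1) 0 = b.getD (i+1) 0 := getD_set_ne b i (i+1) _ (by omega)
  have := bpos_getD hb hbp (show i < r by omega)
  omega

lemma hook_eq_low (ha : a.length = r) (hb : b.length = r) (hbp : ∀ x ∈ b, 0 < x)
    {i n : ℕ} (hi : i + 1 < r) (hn : n + 1 < (b.take (i+1)).sum) :
    hookRemove a b i n = rectsP a b n := by
  have hsum : (b.take r).sum = b.sum := by rw [List.take_of_length_le (by omega)]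
  have hnlt : n < b.sum := by
    have := sum_take_mono b (show i+1 ≤ r by omega); omega
  obtain ⟨j, hj, h1, h2⟩ := rectsP_exists_block b n hnlt
  rw [hb] at hj
  have hji : j ≤ i := by
    by_contra hc
    have := sum_take_mono b (show i+1 ≤ j by omega)
    omega
  have hv : rectsP a b n = a.getD j 0 := rectsP_block j a b n (by omega) h1 h2
  rw [hv, hookRemove, ← getD_set_ne a (i+1) j (a.getD (i + 1) 0 - 1) (by omega)]
  apply rectsP_block j _ _ n (by simp; omega)
  · rw [hook_take_le hb (by omega)]; exact h1
  · rcases Nat.lt_or_ge (j+1) (i+1) with hlt | hge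
    · rw [hook_take_le hb (by omega)]; exact h2
    · have hje : j = i := by omega
      subst hje
      have := hook_take_succ hb hbp hi
      rw [show j + 1 = j + 1 from rfl]
      omega

lemma hook_eq_mid (ha : a.length = r) (hb : b.length = r) (hbp : ∀ x ∈ b, 0 < x)
    {i n : ℕ} (hi : i + 1 < r) (h1 : (b.take (i+1)).sum ≤ n + 1)
    (h2 : n < (b.take (i+2)).sum) :
    hookRemove a b i n = a.getD (i+1) 0 - 1 := by
  have e1 := hook_take_succ hb hbp hi
  have e2 := hook_take_ge hb hbp hi (le_refl (i+2))
  have := rectsP_block (i+1) (a.set (i + 1) (a.getD (i + 1) 0 - 1))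
    ((b.set i (b.getD i 0 - 1)).set (i + 1) (b.getD (i + 1) 0 + 1)) n
    (by simp; omega) (by omega) (by rw [show i + 1 + 1 = i + 2 from rfl]; omega)
  rw [hookRemove, this, getD_set_self a (i+1) _ (by omega)]

lemma hook_eq_high (ha : a.length = r) (hb : b.length = r) (hbp : ∀ x ∈ b, 0 < x)
    {i n : ℕ} (hi : i + 1 < r) (hn : (b.take (i+2)).sum ≤ n) :
    hookRemove a b i n = rectsP a b n := by
  have hsum : (b.take r).sum = b.sum := by rw [List.take_of_length_le (by omega)]
  have hsum' := hook_take_ge hb hbp hi (show i + 2 ≤ r by omega)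
  rw [List.take_of_length_le (l := (b.set i (b.getD i 0 - 1)).set (i + 1) (b.getD (i + 1) 0 + 1)) (by simp; omega)] at hsum'
  by_cases hnb : n < b.sum
  · obtain ⟨j, hj, h1, h2⟩ := rectsP_exists_block b n hnb
    rw [hb] at hj
    have hji : i + 2 ≤ j := by
      by_contra hc
      have := sum_take_mono b (show j+1 ≤ i+2 by omega)
      omega
    have hv : rectsP a b n = a.getD j 0 := rectsP_block j a b n (by omega) h1 h2
    rw [hv, hookRemove, ← getD_set_ne a (i+1) j (a.getD (i + 1) 0 - 1) (by omega)]
    apply rectsP_block j _ _ n (by simp; omega)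
    · rw [hook_take_ge hb hbp hi (by omega)]; exact h1
    · rw [hook_take_ge hb hbp hi (by omega)]; exact h2
  · rw [hookRemove, rectsP_eq_zero _ _ _ (by omega), rectsP_eq_zero _ _ _ (by omega)]

end Eval

section EvalZ

variable {r : ℕ} {a b : List ℕ}

lemma headI_getD (hb : b ≠ []) : b.headI = b.getD 0 0 := by
  cases b with
  | nil => simp at hb
  | cons y l => rfl

lemma lz_take_mid (hr : 2 ≤ r) (hb : b.length = r) (hbp : ∀ x ∈ b, 0 < x)
    {k : ℕ} (hk1 : 1 ≤ k) (hk2 : k ≤ r - 1) :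
    (((b.set 0 (b.headI - 1)).set (b.length - 1) (b.getD (b.length - 1) 0 + 1)).take k).sum + 1
      = (b.take k).sum := by
  rw [sum_take_set_of_le _ _ _ _ (by omega)]
  have e := sum_take_set b 0 k (b.headI - 1) (by omega) (by omega)
  have h0 := bpos_getD hb hbp (show 0 < r by omega)
  rw [headI_getD (by intro h; rw [h] at hb; simp at hb; omega)]
  rw [headI_getD (by intro h; rw [h] at hb; simp at hb; omega)] at e
  omega

lemma lz_sum (hr : 2 ≤ r) (hb : b.length = r) (hbp : ∀ x ∈ b, 0 < x) :
    ((b.set 0 (b.headI - 1)).set (b.length - 1) (b.getD (b.length - 1) 0 + 1)).sum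
      = b.sum := by
  set b1 := b.set 0 (b.headI - 1) with hb1
  have hlen1 : b1.length = r := by simp [hb1, hb]
  have e1 : (b1.take r).sum + b.getD 0 0 = (b.take r).sum + (b.headI - 1) :=
    sum_take_set b 0 r _ (by omega) (by omega)
  have e2 : ((b1.set (b.length - 1) (b.getD (b.length - 1) 0 + 1)).take r).sum
      + b1.getD (b.length - 1) 0
      = (b1.take r).sum + (b.getD (b.length - 1) 0 + 1) :=
    sum_take_set b1 (b.length - 1) r _ (by omega) (by omega)
  have e3 : b1.getD (b.length - 1) 0 = b.getD (b.length - 1) 0 :=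
    getD_set_ne b 0 (b.length - 1) _ (by omega)
  have h0 := bpos_getD hb hbp (show 0 < r by omega)
  rw [headI_getD (by intro h; rw [h] at hb; simp at hb; omega)] at e1
  have t1 : (b.take r).sum = b.sum := by rw [List.take_of_length_le (by omega)]
  have t2 : ((b1.set (b.length - 1) (b.getD (b.length - 1) 0 + 1)).take r).sum
      = (b1.set (b.length - 1) (b.getD (b.length - 1) 0 + 1)).sum := by
    rw [List.take_of_length_le (by simp [hlen1])]
  omega

lemma A_getD_zero (ha : a ≠ []) :
    (a.headI :: (a.tail.map fun x => x - 1)).getD 0 0 = a.getD 0 0 := by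
  rw [List.getD_cons_zero, headI_getD ha]

lemma A_getD_succ (hr : 2 ≤ r) (ha : a.length = r) {j : ℕ} (hj1 : 1 ≤ j) (hj2 : j < r) :
    (a.headI :: (a.tail.map fun x => x - 1)).getD j 0 = a.getD j 0 - 1 := by
  obtain ⟨j', rfl⟩ : ∃ j', j = j' + 1 := ⟨j - 1, by omega⟩
  rw [List.getD_cons_succ]
  rw [List.getD_eq_getElem?_getD, List.getElem?_map, List.getElem?_tail,
    List.getD_eq_getElem?_getD]
  rw [List.getElem?_eq_getElem (by omega)]
  rfl

lemma lamZero_low (hr : 2 ≤ r) (ha : a.length = r) (hb : b.length = r)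
    (hbp : ∀ x ∈ b, 0 < x) {n : ℕ} (hn : n + 1 < (b.take 1).sum) :
    lamZero a b n = a.getD 0 0 := by
  have e := lz_take_mid hr hb hbp (le_refl 1) (by omega)
  rw [lamZero, ← A_getD_zero (by intro h; rw [h] at ha; simp at ha; omega)]
  exact rectsP_block 0 _ _ n (by simp; omega) (by simp)
    (by rw [show (0:ℕ)+1 = 1 from rfl]; omega)

lemma lamZero_mid (hr : 2 ≤ r) (ha : a.length = r) (hb : b.length = r)
    (hbp : ∀ x ∈ b, 0 < x) {j n : ℕ} (hj1 : 1 ≤ j) (hj2 : j < r)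
    (h1 : (b.take j).sum ≤ n + 1) (h2 : n + 1 < (b.take (j+1)).sum) :
    lamZero a b n = a.getD j 0 - 1 := by
  have ej := lz_take_mid hr hb hbp (show 1 ≤ j by omega) (by
    rcases Nat.lt_or_ge j (r-1) with h | h
    · omega
    · -- j = r - 1
      omega)
  rw [lamZero, ← A_getD_succ hr ha hj1 hj2]
  apply rectsP_block j _ _ n (by simp; omega) (by omega)
  rcases Nat.lt_or_ge (j+1) r with hlt | hge
  · have := lz_take_mid hr hb hbp (show 1 ≤ j+1 by omega) (by omega)
    omega
  · -- j + 1 = r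
    have hsum := lz_sum hr hb hbp
    have t1 : (b.take (j+1)).sum = b.sum := by
      rw [List.take_of_length_le (by omega)]
    have t2 : (((b.set 0 (b.headI - 1)).set (b.length - 1) (b.getD (b.length - 1) 0 + 1)).take (j+1)).sum
        = ((b.set 0 (b.headI - 1)).set (b.length - 1) (b.getD (b.length - 1) 0 + 1)).sum := by
      rw [List.take_of_length_le (by simp [hb]; omega)]
    omega

lemma lamZero_last (hr : 2 ≤ r) (ha : a.length = r) (hb : b.length = r)
    (hbp : ∀ x ∈ b, 0 < x) {n : ℕ} (hn : n + 1 = (b.take r).sum) :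
    lamZero a b n = a.getD (r-1) 0 - 1 := by
  have hlast := bpos_getD hb hbp (show r - 1 < r by omega)
  have hstep : (b.take r).sum = (b.take (r-1)).sum + b.getD (r-1) 0 := by
    have := List.sum_take_succ b (r-1) (by omega)
    rw [show r - 1 + 1 = r by omega] at this
    rw [this, List.getD_eq_getElem b 0 (by omega)]
  have ej := lz_take_mid hr hb hbp (show 1 ≤ r - 1 by omega) (le_refl (r-1))
  have hsum := lz_sum hr hb hbp
  have t1 : (b.take r).sum = b.sum := by rw [List.take_of_length_le (by omega)]
  have t2 : (((b.set 0 (b.headI - 1)).set (b.length - 1) (b.getD (b.length - 1) 0 + 1)).take (r-1+1)).sum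
      = ((b.set 0 (b.headI - 1)).set (b.length - 1) (b.getD (b.length - 1) 0 + 1)).sum := by
    rw [List.take_of_length_le (by simp [hb]; omega)]
  rw [lamZero, ← A_getD_succ hr ha (show 1 ≤ r - 1 by omega) (by omega)]
  exact rectsP_block (r-1) _ _ n (by simp [hb]; omega) (by omega) (by omega)

lemma lamZero_zero (hr : 2 ≤ r) (ha : a.length = r) (hb : b.length = r)
    (hbp : ∀ x ∈ b, 0 < x) {n : ℕ} (hn : b.sum ≤ n) :
    lamZero a b n = 0 := by
  have hsum := lz_sum hr hb hbp
  rw [lamZero, rectsP_eq_zero _ _ _ (by omega)]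

end EvalZ


/-- for a canonical `λ = (a_1^{b_1},…,a_r^{b_r})` with `r ≥ 2`, the
componentwise minimum (intersection) of the hook removals `λ^1, …, λ^{r−1}`
equals `λ^0`. -/
theorem inf_hookRemove_eq_lamZero (r : ℕ) (a b : List ℕ) (hr : 2 ≤ r)
    (ha : a.length = r) (hb : b.length = r) (hch : a.Chain' (· > ·))
    (hap : ∀ x ∈ a, 0 < x) (hbp : ∀ x ∈ b, 0 < x) :
    ∀ n, ((Finset.range (r - 1)).inf'
        (Finset.nonempty_range_iff.mpr (by omega))
        fun i => hookRemove a b i n) = lamZero a b n := by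

  intro n
  have hchge : a.Chain' (· ≥ ·) := hch.imp (fun _ _ h => le_of_lt h)
  have hbsum : (b.take r).sum = b.sum := by rw [List.take_of_length_le (by omega)]
  have hmem0 : 0 ∈ Finset.range (r - 1) := Finset.mem_range.mpr (by omega)
  by_cases hA : n + 1 < (b.take 1).sum
  · -- Case A
    have hall : ∀ i, i < r - 1 → hookRemove a b i n = a.getD 0 0 := by
      intro i hi
      rw [hook_eq_low ha hb hbp (by omega)
        (lt_of_lt_of_le hA (sum_take_mono b (by omega)))]
      exact rectsP_block 0 a b n (by omega) (by simp)
        (by rw [show (0:ℕ)+1 = 1 from rfl]; omega)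
    rw [lamZero_low hr ha hb hbp hA]
    refine le_antisymm ((Finset.inf'_le _ hmem0).trans_eq (hall 0 (by omega))) ?_
    exact Finset.le_inf' _ _ (fun i hi => (hall i (Finset.mem_range.mp hi)).ge)
  · push_neg at hA
    by_cases hD : b.sum ≤ n
    · -- Case D
      have hall : ∀ i, i < r - 1 → hookRemove a b i n = 0 := by
        intro i hi
        rw [hook_eq_high ha hb hbp (by omega)
          (le_trans (le_trans (sum_take_mono b (show i+2 ≤ r by omega)) hbsum.le) hD)]
        exact rectsP_eq_zero a b n hD
      rw [lamZero_zero hr ha hb hbp hD]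
      refine le_antisymm ((Finset.inf'_le _ hmem0).trans_eq (hall 0 (by omega))) ?_
      exact Finset.le_inf' _ _ (fun i hi => (hall i (Finset.mem_range.mp hi)).ge)
    · push_neg at hD
      by_cases hC : n + 1 = b.sum
      · -- Case C : n is the last cell
        have hlast := bpos_getD hb hbp (show r - 1 < r by omega)
        have hstep : (b.take r).sum = (b.take (r-1)).sum + b.getD (r-1) 0 := by
          have := List.sum_take_succ b (r-1) (by omega)
          rw [show r - 1 + 1 = r by omega] at this
          rw [this, List.getD_eq_getElem b 0 (by omega)]
        have hlam := lamZero_last hr ha hb hbp (show n + 1 = (b.take r).sum by omega)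
        have hookval : hookRemove a b (r-2) n = a.getD (r-1) 0 - 1 := by
          have h1' : (b.take (r-2+1)).sum ≤ n + 1 := by
            rw [show r-2+1 = r-1 by omega]; omega
          have h2' : n < (b.take (r-2+2)).sum := by
            rw [show r-2+2 = r by omega]; omega
          have := hook_eq_mid ha hb hbp (show r-2+1 < r by omega) h1' h2'
          rw [this, show r-2+1 = r-1 by omega]
        rw [hlam]
        refine le_antisymm ((Finset.inf'_le _ (Finset.mem_range.mpr (by omega))).trans_eq
          hookval) ?_
        apply Finset.le_inf'
        intro i hi
        have hi' := Finset.mem_range.mp hi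
        rcases Nat.lt_or_ge i (r-2) with hlt | hge
        · rw [hook_eq_high ha hb hbp (by omega)
            (le_trans (sum_take_mono b (show i+2 ≤ r-1 by omega)) (by omega))]
          have hv : rectsP a b n = a.getD (r-1) 0 :=
            rectsP_block (r-1) a b n (by omega) (by omega)
              (by rw [show r-1+1 = r by omega]; omega)
          omega
        · have : i = r - 2 := by omega
          rw [this, hookval]
      · -- Case B
        have hnlt : n + 1 < b.sum := by omega
        obtain ⟨j, hj, h1, h2⟩ := rectsP_exists_block b (n+1) hnlt
        rw [hb] at hj
        have hj1 : 1 ≤ j := by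
          rcases Nat.eq_zero_or_pos j with rfl | h
          · rw [show (0:ℕ)+1 = 1 from rfl] at h2; omega
          · exact h
        have hlam := lamZero_mid hr ha hb hbp hj1 hj h1 h2
        have hval : rectsP a b (n+1) = a.getD j 0 :=
          rectsP_block j a b (n+1) (by omega) h1 h2
        rw [hlam]
        have hmono : rectsP a b (n+1) ≤ rectsP a b n :=
          rectsP_antitone a b hchge n (n+1) (Nat.le_succ n)
        refine le_antisymm ?_ ?_
        · -- witness i = j - 1
          have hookval : hookRemove a b (j-1) n = a.getD j 0 - 1 := by
            have h1' : (b.take (j-1+1)).sum ≤ n + 1 := by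
              rw [show j-1+1 = j by omega]; omega
            have h2' : n < (b.take (j-1+2)).sum := by
              rw [show j-1+2 = j+1 by omega]; omega
            have := hook_eq_mid ha hb hbp (show j-1+1 < r by omega) h1' h2'
            rw [this, show j-1+1 = j by omega]
          exact (Finset.inf'_le _ (Finset.mem_range.mpr (by omega))).trans_eq hookval
        · apply Finset.le_inf'
          intro i hi
          have hi' := Finset.mem_range.mp hi
          rcases Nat.lt_or_ge (n+1) ((b.take (i+1)).sum) with hn1 | hn1
          · rw [hook_eq_low ha hb hbp (by omega) hn1]
            omega
          · rcases Nat.lt_or_ge n ((b.take (i+2)).sum) with hn2 | hn2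
            · rw [hook_eq_mid ha hb hbp (by omega) hn1 hn2]
              have hTi : rectsP a b ((b.take (i+1)).sum) = a.getD (i+1) 0 := by
                refine rectsP_block (i+1) a b _ (by omega) le_rfl ?_
                have := List.sum_take_succ b (i+1) (by omega)
                rw [show i+1+1 = i+2 from rfl] at this
                have hbi := bpos_getD hb hbp (show i+1 < r by omega)
                rw [List.getD_eq_getElem b 0 (by omega)] at hbi
                rw [show i+1+1 = i+2 from rfl, this]
                omega
              have hle : rectsP a b (n+1) ≤ rectsP a b ((b.take (i+1)).sum) :=
                rectsP_antitone a b hchge _ _ hn1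
              omega
            · rw [hook_eq_high ha hb hbp (by omega) hn2]
              omega
end

section
/- Let λ = (a_1, a_2^{b_2}) and μ = (a_1′, a_2′^{b_2′}) be partitions with a_1 > a_2 > 1, a_1′ > a_2′ > 1, b_2, b_2′ > 0, and |λ| = |μ|. Suppose a_2 − 1 = b_2′ + 1 and a_2′ − 1 = b_2 + 1, and suppose λ and μ have the same number of subdiagrams of every size. Then λ = μ (and in fact a_2 − 1 = a_2′ − 1 = b_2 + 1 = b_2′ + 1). -/
/-- The size (number of boxes) of a partition. -/
noncomputable def psize (f : ℕ → ℕ) : ℕ := Set.ncard {p : ℕ × ℕ | p.2 < f p.1}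

/-- The number of subdiagrams of `f` of size `s`. -/
noncomputable def subCount (f : ℕ → ℕ) (s : ℕ) : ℕ :=
  Set.ncard {g : ℕ → ℕ | Antitone g ∧ g ≤ f ∧ psize g = s}

/-- Evaluation of a two-rectangle partition. -/
lemma rects_eval (x y b : ℕ) (i : ℕ) :
    rectsP [x, y] [1, b] i = if i = 0 then x else if i ≤ b then y else 0 := by
  unfold rectsP
  cases i with
  | zero => simp
  | succ n =>
    simp only [List.zip, List.zipWith, List.flatMap, List.map, List.replicate, List.flatten, List.append_eq,
      List.append_nil, List.nil_append, List.singleton_append, List.getD_cons_succ]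
    rcases lt_or_ge n b with h | h
    · rw [List.getD_eq_getElem?_getD, List.getElem?_replicate_of_lt h]
      simp [Nat.succ_le_of_lt h]
    · rw [List.getD_eq_getElem?_getD, List.getElem?_eq_none (by simpa using h)]
      simp only [Option.getD_none]
      have : ¬ (n + 1 ≤ b) := by omega
      simp [this]

lemma ncard_Iio (n : ℕ) : Set.ncard (Set.Iio n : Set ℕ) = n := by
  rw [← Finset.coe_Iio, Set.ncard_coe_finset, Nat.card_Iio]

/-- The size of a single column of height `s`. -/
lemma psize_col (s : ℕ) : psize (fun i => if i < s then 1 else 0) = s := by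
  unfold psize
  have : {p : ℕ × ℕ | p.2 < if p.1 < s then 1 else 0}
      = (fun i => (i, 0)) '' Set.Iio s := by
    ext ⟨i, j⟩
    simp only [Set.mem_setOf_eq, Set.mem_image, Set.mem_Iio, Prod.mk.injEq]
    constructor
    · intro h
      by_cases hi : i < s
      · simp only [hi, if_true] at h
        exact ⟨i, hi, rfl, by omega⟩
      · simp [hi] at h
    · rintro ⟨k, hk, rfl, rfl⟩
      simp [hk]
  rw [this, Set.ncard_image_of_injective _ (fun a b h => by
    simpa using (Prod.mk.injEq _ _ _ _ ▸ h).1), ncard_Iio]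

/-- Each row of a subdiagram of a two-rectangle partition is at most the size. -/
lemma row_le (x y b : ℕ) (hyx : y ≤ x) (g : ℕ → ℕ)
    (hg : g ≤ rectsP [x, y] [1, b]) (i : ℕ) : g i ≤ psize g := by
  have hsub : {p : ℕ × ℕ | p.2 < g p.1} ⊆ Set.Iic b ×ˢ Set.Iio x := by
    rintro ⟨m, n⟩ hmn
    simp only [Set.mem_setOf_eq] at hmn
    have hf : g m ≤ rectsP [x, y] [1, b] m := hg m
    rw [rects_eval] at hf
    simp only [Set.mem_prod, Set.mem_Iic, Set.mem_Iio]
    split_ifs at hf <;> omega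
  have hfin : {p : ℕ × ℕ | p.2 < g p.1}.Finite :=
    ((Set.finite_Iic b).prod (Set.finite_Iio x)).subset hsub
  have himg : (fun j => (i, j)) '' Set.Iio (g i) ⊆ {p : ℕ × ℕ | p.2 < g p.1} := by
    rintro ⟨m, n⟩ ⟨k, hk, hkeq⟩
    simp only [Prod.mk.injEq] at hkeq
    obtain ⟨rfl, rfl⟩ := hkeq
    exact hk
  have := Set.ncard_le_ncard himg hfin
  rwa [Set.ncard_image_of_injective _ (fun a b h => by
    simpa using (Prod.mk.injEq _ _ _ _ ▸ h).2), ncard_Iio] at this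

/-- The set of subdiagrams of a two-rectangle partition is finite. -/
lemma sub_finite (x y b : ℕ) (hyx : y ≤ x) :
    {g : ℕ → ℕ | g ≤ rectsP [x, y] [1, b]}.Finite := by
  apply Set.Finite.of_finite_image
    (f := fun g => fun i : Fin (b + 1) => (⟨min (g i.1) x, by omega⟩ : Fin (x + 1)))
  · exact Set.toFinite _
  · intro g1 hg1 g2 hg2 heq
    funext i
    have h1 : g1 i ≤ rectsP [x, y] [1, b] i := hg1 i
    have h2 : g2 i ≤ rectsP [x, y] [1, b] i := hg2 i
    rw [rects_eval] at h1 h2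
    rcases le_or_gt i b with hi | hi
    · have := congrFun heq ⟨i, by omega⟩
      simp only [Fin.mk.injEq] at this
      split_ifs at h1 h2 <;> omega
    · split_ifs at h1 h2 <;> omega

/-- Key strict inequality: if `b < b'` then the shorter partition has strictly
fewer subdiagrams of size `b + 2`. -/
lemma key_lt (x y b x' y' b' : ℕ) (hx : y < x) (hx' : y' < x')
    (hy : y = b' + 2) (hy' : y' = b + 2) (hlt : b < b') :
    subCount (rectsP [x, y] [1, b]) (b + 2)
      < subCount (rectsP [x', y'] [1, b']) (b + 2) := by
  set s := b + 2 with hs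
  set A := {g : ℕ → ℕ | Antitone g ∧ g ≤ rectsP [x, y] [1, b] ∧ psize g = s} with hA
  set B := {g : ℕ → ℕ | Antitone g ∧ g ≤ rectsP [x', y'] [1, b'] ∧ psize g = s} with hB
  have hBfin : B.Finite := (sub_finite x' y' b' hx'.le).subset (fun g hg => hg.2.1)
  have hsub : A ⊆ B := by
    rintro g ⟨hanti, hle, hps⟩
    refine ⟨hanti, fun i => ?_, hps⟩
    have hrow : g i ≤ s := hps ▸ row_le x y b hx.le g hle i
    have hlei : g i ≤ rectsP [x, y] [1, b] i := hle i
    rw [rects_eval] at hlei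
    show g i ≤ rectsP [x', y'] [1, b'] i
    rw [rects_eval]
    split_ifs at hlei ⊢ <;> omega
  have hcmem : (fun i => if i < s then 1 else 0) ∈ B := by
    refine ⟨?_, ?_, psize_col s⟩
    · intro i j hij
      dsimp only
      split_ifs <;> omega
    · intro i
      show (if i < s then 1 else 0) ≤ rectsP [x', y'] [1, b'] i
      rw [rects_eval]
      split_ifs <;> omega
  have hcnot : (fun i => if i < s then 1 else 0) ∉ A := by
    rintro ⟨-, hle, -⟩
    have h0 : rectsP [x, y] [1, b] (b + 1) = 0 := by
      rw [rects_eval, if_neg (by omega : ¬ (b + 1 = 0)), if_neg (by omega : ¬ (b + 1 ≤ b))]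
    have hv : (if b + 1 < s then 1 else 0) ≤ rectsP [x, y] [1, b] (b + 1) := hle (b + 1)
    rw [h0] at hv
    have h1 : b + 1 < s := by omega
    simp [h1] at hv
  exact Set.ncard_lt_ncard ⟨hsub, fun hba => hcnot (hba hcmem)⟩ hBfin

/-- let `λ = (a_1, a_2^{b_2})`, `μ = (a_1′, a_2′^{b_2′})` with
`a_1 > a_2 > 1`, `a_1′ > a_2′ > 1`, `b_2, b_2′ > 0`, `|λ| = |μ|`,
`a_2 − 1 = b_2′ + 1` and `a_2′ − 1 = b_2 + 1`.  If `λ` and `μ` have the same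
number of subdiagrams of every size, then `λ = μ`, and in fact
`a_2 − 1 = a_2′ − 1 = b_2 + 1 = b_2′ + 1`. -/
theorem two_rectangle_case (a1 a2 b2 a1' a2' b2' : ℕ)
    (h1 : a2 < a1) (h2 : 1 < a2) (h1' : a2' < a1') (h2' : 1 < a2')
    (hb : 0 < b2) (hb' : 0 < b2')
    (hsz : a1 + a2 * b2 = a1' + a2' * b2')
    (he1 : a2 - 1 = b2' + 1) (he2 : a2' - 1 = b2 + 1)
    (hcnt : ∀ s, subCount (rectsP [a1, a2] [1, b2]) s
                = subCount (rectsP [a1', a2'] [1, b2']) s) :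
    a1 = a1' ∧ a2 = a2' ∧ b2 = b2' ∧ a2 = b2 + 2 ∧ a2' = b2' + 2 := by
  have hy : a2 = b2' + 2 := by omega
  have hy' : a2' = b2 + 2 := by omega
  have hbb : b2 = b2' := by
    rcases lt_trichotomy b2 b2' with hlt | heq | hgt
    · have := key_lt a1 a2 b2 a1' a2' b2' h1 h1' hy hy' hlt
      rw [hcnt (b2 + 2)] at this
      omega
    · exact heq
    · have := key_lt a1' a2' b2' a1 a2 b2 h1' h1 hy' hy hgt
      rw [← hcnt (b2' + 2)] at this
      omega
  subst hbb
  have ha2 : a2 = a2' := by omega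
  subst ha2
  refine ⟨by omega, rfl, rfl, by omega, by omega⟩
end
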